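/- Let A be a commutative domain and let f : F \to G, g : G \to H be maps of finite free A-modules with g \circ f = 0. If the rank of f (size of the largest nonvanishing minor of a matrix representing f over the fraction field) plus the rank of g equals the rank of G, and both I(f) and I(g) equal the unit ideal, then the complex F \to G \to H is exact at G. -/

import Mathlib

open Function Matrix

/-- The ideal of `r × r` minors of a matrix `U` over a commutative ring. -/
def minorsIdeal {A : Type*} [CommRing A] {a b : ℕ}
    (U : Matrix (Fin b) (Fin a) A) (r : ℕ) : Ideal A :=
  Ideal.span {x : A | ∃ (ri : Fin r → Fin b) (ci : Fin r → Fin a),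
    Injective ri ∧ Injective ci ∧ x = (U.submatrix ri ci).det}

/-- The rank of a matrix over a domain: its rank over the fraction field (which is
the size of the largest nonvanishing minor). -/
noncomputable def matRank {A : Type*} [CommRing A] [IsDomain A] {a b : ℕ}
    (U : Matrix (Fin b) (Fin a) A) : ℕ :=
  (U.map (algebraMap A (FractionRing A))).rank

/-- Multiplication by a column-selected submatrix is multiplication by the original
matrix applied to the vector extended by zero. -/
lemma submatrix_id_mulVec {R : Type*} [CommRing R] {a b r : ℕ}
    (U : Matrix (Fin b) (Fin a) R) (ci : Fin r → Fin a) (w : Fin r → R) :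
    (U.submatrix id ci) *ᵥ w = U *ᵥ (fun j => ∑ k, if ci k = j then w k else 0) := by
  funext i
  simp only [Matrix.mulVec, dotProduct, Matrix.submatrix_apply, id_eq]
  calc ∑ k, U i (ci k) * w k
      = ∑ k, ∑ j, (if ci k = j then U i j * w k else 0) := by
        refine Finset.sum_congr rfl fun k _ => ?_
        simp
    _ = ∑ j, ∑ k, (if ci k = j then U i j * w k else 0) := Finset.sum_comm
    _ = ∑ j, U i j * ∑ k, (if ci k = j then w k else 0) := by
        refine Finset.sum_congr rfl fun j _ => ?_
        rw [Finset.mul_sum]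
        refine Finset.sum_congr rfl fun k _ => ?_
        split <;> simp

theorem stmt_5 (A : Type*) [CommRing A] [IsDomain A] [IsNoetherianRing A]
    (a b c : ℕ) (U : Matrix (Fin b) (Fin a) A) (V : Matrix (Fin c) (Fin b) A)
    (hcomp : V * U = 0)
    (hrank : matRank U + matRank V = b)
    (hIU : minorsIdeal U (matRank U) = ⊤)
    (hIV : minorsIdeal V (matRank V) = ⊤) :
    LinearMap.range U.mulVecLin = LinearMap.ker V.mulVecLin := by
  classical
  set K := FractionRing A with hK
  set φ := algebraMap A K with hφdef
  have hφ : Function.Injective φ := IsFractionRing.injective A K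
  set UK := U.map φ with hUKdef
  set VK := V.map φ with hVKdef
  have hVUK : VK * UK = 0 := by
    rw [hUKdef, hVKdef, ← Matrix.map_mul, hcomp]
    ext i j
    simp
  have hle : LinearMap.range UK.mulVecLin ≤ LinearMap.ker VK.mulVecLin := by
    rintro _ ⟨y, rfl⟩
    simp only [LinearMap.mem_ker, Matrix.mulVecLin_apply, Matrix.mulVec_mulVec, hVUK,
      Matrix.zero_mulVec]
    rw [Matrix.mulVec_mulVec, hVUK, Matrix.zero_mulVec]
  have hb : Module.finrank K (Fin b → K) = b := by simp
  have hrangeU : Module.finrank K ↥(LinearMap.range UK.mulVecLin) = matRank U := rfl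
  have hrangeV : Module.finrank K ↥(LinearMap.range VK.mulVecLin) = matRank V := rfl
  have hker : Module.finrank K ↥(LinearMap.ker VK.mulVecLin) = matRank U := by
    have h := LinearMap.finrank_range_add_finrank_ker VK.mulVecLin
    rw [hb, hrangeV] at h
    omega
  have hkr : LinearMap.range UK.mulVecLin = LinearMap.ker VK.mulVecLin :=
    Submodule.eq_of_le_of_finrank_le hle (by rw [hker, hrangeU])
  apply le_antisymm
  · rintro _ ⟨y, rfl⟩
    simp only [LinearMap.mem_ker, Matrix.mulVecLin_apply, Matrix.mulVec_mulVec, hcomp,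
      Matrix.zero_mulVec]
  · intro x hx
    have hx' : V *ᵥ x = 0 := hx
    have hxK : VK *ᵥ (φ ∘ x) = 0 := by
      funext i
      rw [Pi.zero_apply, ← RingHom.map_mulVec, hx', Pi.zero_apply, map_zero]
    have hxrange : (φ ∘ x) ∈ LinearMap.range UK.mulVecLin := by
      rw [hkr]
      exact hxK
    set r := matRank U with hr
    have main : ∀ Δ : A, (∃ (ri : Fin r → Fin b) (ci : Fin r → Fin a),
        Injective ri ∧ Injective ci ∧ Δ = (U.submatrix ri ci).det) →
        Δ • x ∈ LinearMap.range U.mulVecLin := by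
      rintro Δ ⟨ri, ci, hri, hci, rfl⟩
      by_cases hΔ : (U.submatrix ri ci).det = 0
      · rw [hΔ, zero_smul]
        exact Submodule.zero_mem _
      · set M := U.submatrix ri ci with hM
        set W := U.submatrix id ci with hW
        set MK := M.map φ with hMKdef
        set WK := W.map φ with hWKdef
        have hdetMK : MK.det = φ M.det := (RingHom.map_det φ M).symm
        have hdet : MK.det ≠ 0 := by
          rw [hdetMK]
          intro h
          exact hΔ (hφ (by rw [h, map_zero]))
        have hMW : MK = WK.submatrix ri id := by
          ext i j
          simp [hMKdef, hWKdef, hM, hW]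
        have hWU : WK = UK.submatrix id ci := by
          ext i j
          simp [hWKdef, hUKdef, hW]
        have hWKinj : Function.Injective WK.mulVecLin := by
          rw [← LinearMap.ker_eq_bot, LinearMap.ker_eq_bot']
          intro v hv
          simp only [Matrix.mulVecLin_apply] at hv
          by_contra hv0
          refine hdet (Matrix.exists_mulVec_eq_zero_iff.mp ⟨v, hv0, ?_⟩)
          funext i
          rw [hMW]
          show (WK *ᵥ v) (ri i) = 0
          rw [hv, Pi.zero_apply]
        have hWrank : Module.finrank K ↥(LinearMap.range WK.mulVecLin) = r := by
          rw [LinearMap.finrank_range_of_inj hWKinj]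
          simp
        have hWle : LinearMap.range WK.mulVecLin ≤ LinearMap.range UK.mulVecLin := by
          rintro _ ⟨z, rfl⟩
          refine ⟨fun j => ∑ k, if ci k = j then z k else 0, ?_⟩
          simp only [Matrix.mulVecLin_apply]
          rw [← submatrix_id_mulVec, ← hWU]
        have hWeq : LinearMap.range WK.mulVecLin = LinearMap.range UK.mulVecLin :=
          Submodule.eq_of_le_of_finrank_le hWle (le_of_eq (hrangeU.trans hWrank.symm))
        obtain ⟨cvec, hc⟩ : (φ ∘ x) ∈ LinearMap.range WK.mulVecLin := by
          rw [hWeq]; exact hxrange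
        simp only [Matrix.mulVecLin_apply] at hc
        have hMc : MK *ᵥ cvec = (φ ∘ x) ∘ ri := by
          funext i
          rw [hMW]
          show (WK *ᵥ cvec) (ri i) = _
          rw [hc]
          rfl
        set w : Fin r → A := M.adjugate *ᵥ (x ∘ ri) with hw
        have hφw : φ ∘ w = MK.det • cvec := by
          funext k
          show φ ((M.adjugate *ᵥ (x ∘ ri)) k) = _
          rw [RingHom.map_mulVec]
          have hadj : M.adjugate.map ⇑φ = MK.adjugate := by
            rw [hMKdef]
            exact RingHom.map_adjugate φ M
          rw [hadj]
          have : φ ∘ (x ∘ ri) = (φ ∘ x) ∘ ri := rfl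
          rw [this, ← hMc, Matrix.mulVec_mulVec, Matrix.adjugate_mul,
            Matrix.smul_mulVec, Matrix.one_mulVec]
        have hkey : W *ᵥ w = M.det • x := by
          funext i
          apply hφ
          rw [RingHom.map_mulVec φ W w i, hφw]
          have h1 : (WK *ᵥ MK.det • cvec) i = MK.det * (WK *ᵥ cvec) i := by
            rw [Matrix.mulVec_smul]
            rfl
          rw [h1, hc]
          show MK.det * φ (x i) = φ (M.det * x i)
          rw [_root_.map_mul, hdetMK]
        refine ⟨fun j => ∑ k, if ci k = j then w k else 0, ?_⟩
        simp only [Matrix.mulVecLin_apply]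
        rw [← submatrix_id_mulVec, ← hW, hkey, hM]
    have hspan : minorsIdeal U (matRank U) ≤
        Submodule.comap (LinearMap.toSpanSingleton A (Fin b → A) x)
          (LinearMap.range U.mulVecLin) := by
      rw [minorsIdeal]
      refine Ideal.span_le.mpr ?_
      rintro Δ ⟨ri, ci, hri, hci, rfl⟩
      simp only [SetLike.mem_coe, Submodule.mem_comap, LinearMap.toSpanSingleton_apply]
      exact main _ ⟨ri, ci, hri, hci, rfl⟩
    have h1 : (1 : A) ∈ minorsIdeal U (matRank U) := by
      rw [hIU]; trivial
    simpa using hspan h1
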